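/- The bracket on the span of {L_{α,i}, c | α ∈ ℤ, i ∈ ℤ, i ≥ 0} given by [L_{α,i}, L_{β,j}] = ((i+q)(β+p) − (j+q)(α+p)) L_{α+β,i+j} + δ_{α+β,0} δ_{i,0} δ_{j,0} (α³−α)/12 · c and [c, L_{α,i}] = 0 satisfies the Jacobi identity, so that 𝓑(p,q) is a Lie algebra for any fixed p, q ∈ ℂ*. -/

import Mathlib

/-- The Block type Lie algebra `𝓑(p,q)`: underlying space is
`(ℤ × ℕ →₀ ℂ) × ℂ`, where `L_{α,i} = (single (α,i) 1, 0)` and the central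
element `c = (0, 1)`.  The bracket is
`[L_{α,i}, L_{β,j}] = ((i+q)(β+p) − (j+q)(α+p)) L_{α+β,i+j}
  + δ_{α+β,0} δ_{i,0} δ_{j,0} (α³−α)/12 · c`, with `c` central. -/
noncomputable def BpqBracket (p q : ℂ) (X Y : (ℤ × ℕ →₀ ℂ) × ℂ) : (ℤ × ℕ →₀ ℂ) × ℂ :=
  (X.1.sum fun a x => Y.1.sum fun b y =>
      Finsupp.single (a.1 + b.1, a.2 + b.2)
        (x * y * (((a.2 : ℂ) + q) * ((b.1 : ℂ) + p) - ((b.2 : ℂ) + q) * ((a.1 : ℂ) + p))),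
    X.1.sum fun a x => Y.1.sum fun b y =>
      x * y * (if a.1 + b.1 = 0 ∧ a.2 = 0 ∧ b.2 = 0
        then (((a.1 : ℂ)) ^ 3 - (a.1 : ℂ)) / 12 else 0))

noncomputable def Bv (p q : ℂ) (a b : ℤ × ℕ) : (ℤ × ℕ →₀ ℂ) × ℂ :=
  (Finsupp.single (a.1 + b.1, a.2 + b.2)
      (((a.2 : ℂ) + q) * ((b.1 : ℂ) + p) - ((b.2 : ℂ) + q) * ((a.1 : ℂ) + p)),
   if a.1 + b.1 = 0 ∧ a.2 = 0 ∧ b.2 = 0 then (((a.1 : ℂ)) ^ 3 - (a.1 : ℂ)) / 12 else 0)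

noncomputable def Bb (p q : ℂ) :
    (ℤ × ℕ →₀ ℂ) →ₗ[ℂ] (ℤ × ℕ →₀ ℂ) →ₗ[ℂ] ((ℤ × ℕ →₀ ℂ) × ℂ) :=
  Finsupp.lsum ℂ fun a => LinearMap.toSpanSingleton ℂ _
    (Finsupp.lsum ℂ fun b => LinearMap.toSpanSingleton ℂ _ (Bv p q a b))

lemma Bb_single (p q : ℂ) (a b : ℤ × ℕ) (x y : ℂ) :
    Bb p q (Finsupp.single a x) (Finsupp.single b y) = (x * y) • Bv p q a b := by
  simp [Bb, LinearMap.toSpanSingleton_apply, smul_smul]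

lemma bracket_eq (p q : ℂ) (X Y : (ℤ × ℕ →₀ ℂ) × ℂ) :
    BpqBracket p q X Y = Bb p q X.1 Y.1 := by
  unfold BpqBracket Bb
  rw [Finsupp.lsum_apply]
  conv_rhs => rw [Finsupp.sum, LinearMap.coe_sum, Finset.sum_apply]
  simp only [LinearMap.smul_apply, Finsupp.lsum_apply, LinearMap.toSpanSingleton_apply,
    Finsupp.sum]
  ext : 1
  · dsimp only
    rw [Prod.fst_sum]
    refine Finset.sum_congr rfl fun a _ => ?_
    rw [Prod.smul_fst, Prod.fst_sum, Finset.smul_sum]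
    refine Finset.sum_congr rfl fun b _ => ?_
    simp only [Bv, Prod.smul_fst, smul_smul, Finsupp.smul_single, smul_eq_mul, mul_assoc]
  · dsimp only
    rw [Prod.snd_sum]
    refine Finset.sum_congr rfl fun a _ => ?_
    rw [Prod.smul_snd, Prod.snd_sum, Finset.smul_sum]
    refine Finset.sum_congr rfl fun b _ => ?_
    simp only [Bv, Prod.smul_snd, smul_smul, smul_eq_mul, mul_assoc]

lemma Bv_antisym (p q : ℂ) (a b : ℤ × ℕ) : Bv p q a b = - Bv p q b a := by
  unfold Bv
  rw [Prod.neg_mk, Prod.mk.injEq]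
  constructor
  · have hk : ((b.1 + a.1, b.2 + a.2) : ℤ × ℕ) = (a.1 + b.1, a.2 + b.2) := by
      simp only [Prod.mk.injEq]; omega
    rw [← Finsupp.single_neg, hk]
    exact congrArg _ (by ring)
  · by_cases h : a.1 + b.1 = 0 ∧ a.2 = 0 ∧ b.2 = 0
    · have h' : b.1 + a.1 = 0 ∧ b.2 = 0 ∧ a.2 = 0 := ⟨by omega, h.2.2, h.2.1⟩
      rw [if_pos h, if_pos h']
      have hb : b.1 = -a.1 := by omega
      rw [hb]
      push_cast
      ring
    · have h' : ¬(b.1 + a.1 = 0 ∧ b.2 = 0 ∧ a.2 = 0) := by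
        rintro ⟨u, v, w⟩; exact h ⟨by omega, w, v⟩
      rw [if_neg h, if_neg h']
      simp

lemma Bb_antisym (p q : ℂ) (u v : ℤ × ℕ →₀ ℂ) : Bb p q u v = - Bb p q v u := by
  induction u using Finsupp.induction_linear with
  | zero => simp
  | add f g hf hg =>
      simp only [map_add, LinearMap.add_apply, hf, hg]
      abel
  | single a x =>
      induction v using Finsupp.induction_linear with
      | zero => simp
      | add f g hf hg =>
          simp only [map_add, LinearMap.add_apply, hf, hg]
          abel
      | single b y =>
          rw [Bb_single, Bb_single, Bv_antisym, smul_neg, mul_comm]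

lemma jac_single (p q x y z : ℂ) (a b c : ℤ × ℕ) :
    Bb p q (Finsupp.single a x) (Bb p q (Finsupp.single b y) (Finsupp.single c z)).1
      + Bb p q (Finsupp.single c z) (Bb p q (Finsupp.single a x) (Finsupp.single b y)).1
      + Bb p q (Finsupp.single b y) (Bb p q (Finsupp.single c z) (Finsupp.single a x)).1
      = 0 := by
  have h1 : ∀ (u v : ℤ × ℕ) (s t : ℂ),
      (Bb p q (Finsupp.single u s) (Finsupp.single v t)).1
        = Finsupp.single (u.1 + v.1, u.2 + v.2)
            (s * t * (((u.2 : ℂ) + q) * ((v.1 : ℂ) + p) - ((v.2 : ℂ) + q) * ((u.1 : ℂ) + p))) := by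
    intro u v s t
    rw [Bb_single]
    simp only [Bv, Prod.smul_fst, Finsupp.smul_single, smul_eq_mul, mul_assoc]
  rw [h1, h1, h1, Bb_single, Bb_single, Bb_single]
  refine Prod.ext ?_ ?_
  · simp only [Prod.fst_add, Prod.smul_fst, Bv, Finsupp.smul_single, smul_eq_mul, Prod.fst_zero]
    have k2 : ((c.1 + (a.1 + b.1), c.2 + (a.2 + b.2)) : ℤ × ℕ)
        = (a.1 + (b.1 + c.1), a.2 + (b.2 + c.2)) := by simp [Prod.ext_iff]; omega
    have k3 : ((b.1 + (c.1 + a.1), b.2 + (c.2 + a.2)) : ℤ × ℕ)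
        = (a.1 + (b.1 + c.1), a.2 + (b.2 + c.2)) := by simp [Prod.ext_iff]; omega
    rw [k2, k3, ← Finsupp.single_add, ← Finsupp.single_add]
    convert Finsupp.single_zero _
    · rfl
    push_cast
    ring
  · simp only [Prod.snd_add, Prod.smul_snd, Bv, smul_eq_mul, Prod.snd_zero]
    by_cases hall : a.1 + b.1 + c.1 = 0 ∧ a.2 = 0 ∧ b.2 = 0 ∧ c.2 = 0
    · obtain ⟨h0, h1, h2, h3⟩ := hall
      have i1 : a.1 + (b.1 + c.1) = 0 ∧ a.2 = 0 ∧ b.2 + c.2 = 0 := ⟨by omega, h1, by omega⟩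
      have i2 : c.1 + (a.1 + b.1) = 0 ∧ c.2 = 0 ∧ a.2 + b.2 = 0 := ⟨by omega, h3, by omega⟩
      have i3 : b.1 + (c.1 + a.1) = 0 ∧ b.2 = 0 ∧ c.2 + a.2 = 0 := ⟨by omega, h2, by omega⟩
      rw [if_pos i1, if_pos i2, if_pos i3]
      have hc : c.1 = -(a.1 + b.1) := by omega
      rw [h1, h2, h3, hc]
      push_cast
      ring
    · have i1 : ¬(a.1 + (b.1 + c.1) = 0 ∧ a.2 = 0 ∧ b.2 + c.2 = 0) := by
        rintro ⟨u, v, w⟩; exact hall ⟨by omega, v, by omega, by omega⟩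
      have i2 : ¬(c.1 + (a.1 + b.1) = 0 ∧ c.2 = 0 ∧ a.2 + b.2 = 0) := by
        rintro ⟨u, v, w⟩; exact hall ⟨by omega, by omega, by omega, v⟩
      have i3 : ¬(b.1 + (c.1 + a.1) = 0 ∧ b.2 = 0 ∧ c.2 + a.2 = 0) := by
        rintro ⟨u, v, w⟩; exact hall ⟨by omega, by omega, v, by omega⟩
      rw [if_neg i1, if_neg i2, if_neg i3]
      ring

lemma jac (p q : ℂ) (u v w : ℤ × ℕ →₀ ℂ) :
    Bb p q u (Bb p q v w).1 + Bb p q w (Bb p q u v).1 + Bb p q v (Bb p q w u).1 = 0 := by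
  induction u using Finsupp.induction_linear with
  | zero => simp
  | add f g hf hg =>
      simp only [map_add, LinearMap.add_apply, Prod.fst_add]
      have h := congrArg₂ HAdd.hAdd hf hg
      rw [add_zero] at h
      rw [← h]
      abel
  | single a x =>
    induction v using Finsupp.induction_linear with
    | zero => simp
    | add f g hf hg =>
        simp only [map_add, LinearMap.add_apply, Prod.fst_add]
        have h := congrArg₂ HAdd.hAdd hf hg
        rw [add_zero] at h
        rw [← h]
        abel
    | single b y =>
      induction w using Finsupp.induction_linear with
      | zero => simp
      | add f g hf hg =>
          simp only [map_add, LinearMap.add_apply, Prod.fst_add]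
          have h := congrArg₂ HAdd.hAdd hf hg
          rw [add_zero] at h
          rw [← h]
          abel
      | single c z => exact jac_single p q x y z a b c

theorem stmt5 (p q : ℂ) (hp : p ≠ 0) (hq : q ≠ 0) :
    (∀ X Y : (ℤ × ℕ →₀ ℂ) × ℂ, BpqBracket p q X Y = - BpqBracket p q Y X) ∧
    (∀ (s : ℂ) (X : (ℤ × ℕ →₀ ℂ) × ℂ), BpqBracket p q (0, s) X = 0) ∧
    (∀ X Y Z : (ℤ × ℕ →₀ ℂ) × ℂ,
      BpqBracket p q X (BpqBracket p q Y Z)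
        + BpqBracket p q Z (BpqBracket p q X Y)
        + BpqBracket p q Y (BpqBracket p q Z X) = 0) := by
  refine ⟨fun X Y => ?_, fun s X => ?_, fun X Y Z => ?_⟩
  · rw [bracket_eq, bracket_eq, Bb_antisym]
  · rw [bracket_eq]
    simp
  · simp only [bracket_eq]
    exact jac p q X.1 Y.1 Z.1
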